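/- Let u(p) = λ Σ_{i=1}^{λ} w_i · C(λ−1, i−1) · p^{i−1} (1−p)^{λ−i}. Then ∫₀¹ u(t)² dt = (λ²/(2λ−1)) · Σ_{i=1}^{λ} Σ_{j=1}^{λ} w_i w_j C(λ−1,i−1) C(λ−1,j−1) / C(2λ−2, i+j−2). -/

import Mathlib

open intervalIntegral

lemma beta_step (m n : ℕ) :
    ((m:ℝ)+1) * ∫ x in (0:ℝ)..1, x ^ m * (1 - x) ^ (n+1)
      = ((n:ℝ)+1) * ∫ x in (0:ℝ)..1, x ^ (m+1) * (1 - x) ^ n := by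
  have hder : ∀ x ∈ Set.uIcc (0:ℝ) 1,
      HasDerivAt (fun x : ℝ => x ^ (m+1) * (1 - x) ^ (n+1))
        (((m:ℝ)+1) * (x ^ m * (1 - x) ^ (n+1)) - ((n:ℝ)+1) * (x ^ (m+1) * (1 - x) ^ n)) x := by
    intro x _
    have h1 : HasDerivAt (fun x : ℝ => x ^ (m+1)) (((m:ℝ)+1) * x ^ m) x := by
      simpa using (hasDerivAt_pow (m+1) x)
    have h2 : HasDerivAt (fun x : ℝ => (1 - x) ^ (n+1)) (-(((n:ℝ)+1) * (1 - x) ^ n)) x := by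
      have := ((hasDerivAt_pow (n+1) (1 - x)).comp x ((hasDerivAt_id x).const_sub 1))
      simpa [Function.comp_def] using this.neg.neg
    exact (h1.fun_mul h2).congr_deriv (by ring)
  have hint : IntervalIntegrable
      (fun x : ℝ => ((m:ℝ)+1) * (x ^ m * (1 - x) ^ (n+1)) - ((n:ℝ)+1) * (x ^ (m+1) * (1 - x) ^ n))
      MeasureTheory.volume 0 1 := by
    apply Continuous.intervalIntegrable; continuity
  have := integral_eq_sub_of_hasDerivAt hder hint
  simp only [one_pow, sub_self, zero_pow, mul_zero, zero_mul, mul_one, sub_zero] at this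
  rw [integral_sub, integral_const_mul, integral_const_mul] at this
  · norm_num at this; linarith
  · exact (by continuity : Continuous fun x : ℝ => ((m:ℝ)+1) * (x ^ m * (1 - x) ^ (n+1))).intervalIntegrable _ _
  · exact (by continuity : Continuous fun x : ℝ => ((n:ℝ)+1) * (x ^ (m+1) * (1 - x) ^ n)).intervalIntegrable _ _

lemma beta_nat (n m : ℕ) :
    ∫ x in (0:ℝ)..1, x ^ m * (1 - x) ^ n
      = (m.factorial * n.factorial : ℝ) / (m + n + 1).factorial := by
  induction n generalizing m with
  | zero =>
      simp [integral_pow, Nat.factorial_succ]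
      field_simp
  | succ n ih =>
      have hm : ((m:ℝ)+1) ≠ 0 := by positivity
      have := beta_step m n
      rw [ih (m+1)] at this
      have h2 : (∫ x in (0:ℝ)..1, x ^ m * (1 - x) ^ (n+1))
          = ((n:ℝ)+1) * ((m+1).factorial * n.factorial : ℝ) / ((m + 1) + n + 1).factorial / ((m:ℝ)+1) := by
        field_simp at this ⊢; linarith
      rw [h2]
      have e1 : ((m+1) + n + 1) = (m + (n+1) + 1) := by ring
      rw [e1]
      rw [Nat.factorial_succ m, Nat.factorial_succ n]
      push_cast
      field_simp

open Finset

/-- With `u(p) = λ ∑_{i=1}^{λ} w_i C(λ-1,i-1) p^{i-1} (1-p)^{λ-i}`,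
`∫₀¹ u(t)² dt = (λ²/(2λ-1)) ∑_i ∑_j w_i w_j C(λ-1,i-1) C(λ-1,j-1) / C(2λ-2, i+j-2)`. -/
theorem stmt_3 (lam : ℕ) (hlam : 1 ≤ lam) (w : Fin lam → ℝ) :
    (∫ t in (0:ℝ)..1, ((lam : ℝ) *
        ∑ i : Fin lam, w i * (Nat.choose (lam - 1) i : ℝ) * t ^ (i : ℕ) * (1 - t) ^ (lam - 1 - i)) ^ 2)
      = (lam : ℝ) ^ 2 / (2 * (lam : ℝ) - 1) *
        ∑ i : Fin lam, ∑ j : Fin lam, w i * w j *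
          (Nat.choose (lam - 1) i : ℝ) * (Nat.choose (lam - 1) j : ℝ) /
          (Nat.choose (2 * lam - 2) ((i : ℕ) + (j : ℕ)) : ℝ) := by
  set c : Fin lam → ℝ := fun i => w i * (Nat.choose (lam - 1) i : ℝ) with hc
  have hexp : ∀ i j : Fin lam, (lam - 1 - (i:ℕ)) + (lam - 1 - (j:ℕ)) = 2 * lam - 2 - ((i:ℕ)+(j:ℕ)) := by
    intro i j; have := i.isLt; have := j.isLt; omega
  -- rewrite integrand
  have key : ∀ t : ℝ, ((lam : ℝ) *
        ∑ i : Fin lam, w i * (Nat.choose (lam - 1) i : ℝ) * t ^ (i : ℕ) * (1 - t) ^ (lam - 1 - i)) ^ 2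
      = ∑ i : Fin lam, ∑ j : Fin lam,
          ((lam:ℝ)^2 * (c i * c j)) * (t ^ ((i:ℕ)+(j:ℕ)) * (1 - t) ^ (2 * lam - 2 - ((i:ℕ)+(j:ℕ)))) := by
    intro t
    rw [mul_pow, sq, sq, Finset.sum_mul_sum, Finset.mul_sum]
    refine Finset.sum_congr rfl fun i _ => ?_
    rw [Finset.mul_sum]
    refine Finset.sum_congr rfl fun j _ => ?_
    rw [← hexp i j, pow_add, pow_add]
    simp only [hc]; ring
  simp_rw [key]
  rw [intervalIntegral.integral_finset_sum]
  · rw [Finset.mul_sum]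
    refine Finset.sum_congr rfl fun i _ => ?_
    rw [intervalIntegral.integral_finset_sum]
    · rw [Finset.mul_sum]
      refine Finset.sum_congr rfl fun j _ => ?_
      rw [intervalIntegral.integral_const_mul, beta_nat]
      have hij : (i:ℕ) + (j:ℕ) ≤ 2 * lam - 2 := by
        have := i.isLt; have := j.isLt; omega
      have hch := Nat.choose_mul_factorial_mul_factorial hij
      have he : (i:ℕ) + (j:ℕ) + (2 * lam - 2 - ((i:ℕ)+(j:ℕ))) + 1 = 2 * lam - 1 := by omega
      rw [he]
      have hfac : (2*lam - 1).factorial = (2*lam - 1) * (2*lam - 2).factorial := by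
        have : 2*lam - 1 = (2*lam - 2) + 1 := by omega
        rw [this, Nat.factorial_succ]
      have hchpos : (0:ℝ) < (Nat.choose (2 * lam - 2) ((i:ℕ)+(j:ℕ)) : ℝ) := by
        exact_mod_cast Nat.choose_pos hij
      have hlpos : (0:ℝ) < 2 * (lam:ℝ) - 1 := by
        have : (1:ℝ) ≤ (lam:ℝ) := by exact_mod_cast hlam
        linarith
      have hcast : ((2*lam - 1 : ℕ) : ℝ) = 2 * (lam:ℝ) - 1 := by
        push_cast [Nat.cast_sub (by omega : 1 ≤ 2*lam)]; ring
      have hch' : (Nat.choose (2 * lam - 2) ((i:ℕ)+(j:ℕ)) : ℝ) *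
          (((i:ℕ)+(j:ℕ)).factorial : ℝ) * ((2 * lam - 2 - ((i:ℕ)+(j:ℕ))).factorial : ℝ)
          = ((2*lam-2).factorial : ℝ) := by exact_mod_cast congrArg (Nat.cast (R := ℝ)) hch
      have hfac' : ((2*lam-1).factorial : ℝ) = (2*(lam:ℝ)-1) * ((2*lam-2).factorial : ℝ) := by
        rw [hfac]; push_cast [hcast]; ring
      have hf1 : (0:ℝ) < (((i:ℕ)+(j:ℕ)).factorial : ℝ) := by exact_mod_cast Nat.factorial_pos _
      have hf2 : (0:ℝ) < ((2 * lam - 2 - ((i:ℕ)+(j:ℕ))).factorial : ℝ) := by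
        exact_mod_cast Nat.factorial_pos _
      rw [hfac', ← hch']
      simp only [hc]
      field_simp
    · intro j _
      exact (Continuous.intervalIntegrable (continuous_const.mul
        ((continuous_pow _).mul ((continuous_const.sub continuous_id).pow _))) _ _)
  · intro i _
    exact Continuous.intervalIntegrable (continuous_finset_sum _ fun j _ =>
      continuous_const.mul
        ((continuous_pow _).mul ((continuous_const.sub continuous_id).pow _))) _ _
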